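/- If R is a commutative ring and A ∈ M_n(R), then the preadjoint matrix satisfies A* = (n-1)! · adj(A), where adj(A) is the classical adjugate of A. -/

import Mathlib

open Matrix Polynomial

/-- The symmetric determinant of a square matrix over a possibly noncommutative ring:
`sdet A = Σ_{α,β ∈ S_n} sgn α · sgn β · a_{α 1, β 1} ⋯ a_{α n, β n}` (ordered product). -/
def sdet {R : Type*} [Ring R] {n : ℕ} (A : Matrix (Fin n) (Fin n) R) : R :=
  ∑ α : Equiv.Perm (Fin n), ∑ β : Equiv.Perm (Fin n),
    ((Equiv.Perm.sign α : ℤ) * (Equiv.Perm.sign β : ℤ)) •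
      (List.ofFn fun i : Fin n => A (α i) (β i)).prod

/-- The preadjoint matrix `A*`: its `(r,s)` entry is the sum over `α, β ∈ S_n`
with `α s = s` and `β s = r` of `sgn α · sgn β` times the ordered product of the
entries `a_{α i, β i}` for `i ≠ s`. -/
def preadj {R : Type*} [Ring R] {n : ℕ} (A : Matrix (Fin n) (Fin n) R) :
    Matrix (Fin n) (Fin n) R :=
  fun r s =>
    ∑ α ∈ Finset.univ.filter (fun α : Equiv.Perm (Fin n) => α s = s),
      ∑ β ∈ Finset.univ.filter (fun β : Equiv.Perm (Fin n) => β s = r),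
        ((Equiv.Perm.sign α : ℤ) * (Equiv.Perm.sign β : ℤ)) •
          (((List.finRange n).filter (fun i => i ≠ s)).map fun i => A (α i) (β i)).prod

open Finset Equiv Equiv.Perm in
private lemma list_prod_eq {R : Type*} [CommRing R] {n : ℕ} (s : Fin n) (f : Fin n → R) :
    (((List.finRange n).filter (fun i => i ≠ s)).map f).prod
      = ∏ i ∈ Finset.univ.filter (fun i => i ≠ s), f i := by
  rw [Finset.prod]; rfl

open Finset Equiv Equiv.Perm in
private lemma card_stab {n : ℕ} (s : Fin n) :
    (Finset.univ.filter (fun α : Perm (Fin n) => α s = s)).card = (n-1).factorial := by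
  rw [← Fintype.card_subtype]
  have e : {α : Perm (Fin n) // α s = s} ≃ Perm {a : Fin n // a ≠ s} := by
    refine (Equiv.subtypeEquivRight ?_).trans
      (Equiv.Perm.subtypeEquivSubtypePerm (fun a => a ≠ s)).symm
    intro f
    constructor
    · intro h a ha
      simp only [ne_eq, not_not] at ha
      subst ha; exact h
    · intro h; exact h s (by simp)
  rw [Fintype.card_congr e, Fintype.card_perm]
  congr 1
  simp [Fintype.card_subtype_compl]

open Finset Equiv Equiv.Perm in
private lemma adjugate_entry {R : Type*} [CommRing R] {n : ℕ}
    (A : Matrix (Fin n) (Fin n) R) (r s : Fin n) :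
    A.adjugate r s = ∑ σ ∈ Finset.univ.filter (fun σ : Perm (Fin n) => σ r = s),
      (Equiv.Perm.sign σ : ℤ) • ∏ i ∈ Finset.univ.filter (fun i => i ≠ r), A (σ i) i := by
  rw [adjugate_apply, det_apply]
  rw [← Finset.sum_filter_add_sum_filter_not Finset.univ (fun σ : Perm (Fin n) => σ r = s)]
  have h2 : ∀ σ ∈ Finset.univ.filter (fun σ : Perm (Fin n) => ¬ σ r = s),
      Equiv.Perm.sign σ • ∏ i, A.updateRow s (Pi.single r 1) (σ i) i = 0 := by
    intro σ hσ
    simp only [mem_filter, mem_univ, true_and] at hσ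
    have : ∏ i, A.updateRow s (Pi.single r 1) (σ i) i = 0 := by
      apply Finset.prod_eq_zero (Finset.mem_univ (σ⁻¹ s))
      have h1 : σ (σ⁻¹ s) = s := by simp
      rw [h1, Matrix.updateRow_self]
      have : σ⁻¹ s ≠ r := fun h => hσ (by rw [← h]; simp)
      simp [Pi.single_apply, this]; exact fun h => absurd h this
    rw [this, smul_zero]
  rw [Finset.sum_eq_zero h2, add_zero]
  refine Finset.sum_congr rfl fun σ hσ => ?_
  simp only [mem_filter, mem_univ, true_and] at hσ
  rw [Finset.filter_ne', ← Finset.mul_prod_erase Finset.univ _ (Finset.mem_univ r),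
    hσ, Matrix.updateRow_self]
  rw [Pi.single_eq_same, one_mul, Units.smul_def]
  congr 1
  refine Finset.prod_congr rfl fun i hi => ?_
  have hi' : i ≠ r := Finset.ne_of_mem_erase hi
  have : σ i ≠ s := fun h => hi' (σ.injective (by rw [h, hσ]))
  rw [Matrix.updateRow_ne this]

open Finset Equiv Equiv.Perm in
theorem preadj_eq_factorial_smul_adjugate {R : Type*} [CommRing R] {n : ℕ}
    (A : Matrix (Fin n) (Fin n) R) :
    preadj A = (n - 1).factorial • A.adjugate := by
  ext r s
  rw [Matrix.smul_apply, adjugate_entry, preadj]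
  simp only [list_prod_eq]
  -- rewrite each inner sum
  have key : ∀ α ∈ Finset.univ.filter (fun α : Perm (Fin n) => α s = s),
      (∑ β ∈ Finset.univ.filter (fun β : Perm (Fin n) => β s = r),
        ((Equiv.Perm.sign α : ℤ) * (Equiv.Perm.sign β : ℤ)) •
          ∏ i ∈ Finset.univ.filter (fun i => i ≠ s), A (α i) (β i))
      = ∑ σ ∈ Finset.univ.filter (fun σ : Perm (Fin n) => σ r = s),
          (Equiv.Perm.sign σ : ℤ) • ∏ i ∈ Finset.univ.filter (fun i => i ≠ r), A (σ i) i := by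
    intro α hα
    simp only [mem_filter, mem_univ, true_and] at hα
    refine Finset.sum_bij' (fun β _ => α * β⁻¹) (fun σ _ => σ⁻¹ * α) ?_ ?_ ?_ ?_ ?_
    · intro β hβ
      simp only [mem_filter, mem_univ, true_and] at hβ ⊢
      have h' : β⁻¹ r = s := by rw [← hβ]; simp
      simp [Perm.mul_apply, h', hα]
    · intro σ hσ
      simp only [mem_filter, mem_univ, true_and] at hσ ⊢
      have : σ⁻¹ s = r := by rw [← hσ]; simp
      simp [Perm.mul_apply, hα, this]
    · intro β hβ; simp [mul_assoc]
    · intro σ hσ; simp [← mul_assoc]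
    · intro β hβ
      simp only [mem_filter, mem_univ, true_and] at hβ
      congr 1
      · simp [_root_.map_mul]
      · refine Finset.prod_bij' (fun j _ => β j) (fun i _ => β⁻¹ i) ?_ ?_ ?_ ?_ ?_
        · intro j hj
          simp only [mem_filter, mem_univ, true_and] at hj ⊢
          intro h; exact hj (β.injective (by rw [h, hβ]))
        · intro i hi
          simp only [mem_filter, mem_univ, true_and] at hi ⊢
          intro h
          apply hi
          rw [← hβ, ← h]; simp
        · intros; simp
        · intros; simp
        · intro j hj
          simp [Perm.mul_apply]
  rw [Finset.sum_congr rfl key, Finset.sum_const, card_stab]
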